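/- For every crowded, unbounded (above) subset X ⊆ ℚ⁺ there exists a function f_X : ω → ω such that for every increasing g : ω → ω with g ≰* f_X (g(n) > f_X(n) for infinitely many n), the set X(g) is crowded and unbounded, hence a perfect unbounded subset of ℚ⁺. -/

import Mathlib

open scoped Classical

/-- The set of positive rationals. -/
def QposSet : Set ℚ := {q : ℚ | 0 < q}

/-- `S` is closed in ℚ⁺ (with its subspace topology). -/
def ClosedInPos (S : Set ℚ) : Prop :=
  ∃ C : Set ℚ, IsClosed C ∧ S = C ∩ QposSet

/-- A subset of a topological space is *crowded* if it has no isolated points. -/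
def CrowdedIn {α : Type*} [TopologicalSpace α] (S : Set α) : Prop :=
  ∀ x ∈ S, x ∈ closure (S \ {x})

/-- `S` is unbounded above. -/
def UnbAbove (S : Set ℚ) : Prop := ∀ b : ℚ, ∃ x ∈ S, b < x

/-- The condition on `k` used in the definition of `Jset`: the interval
`(qₙ - √2/k, qₙ + √2/k)` avoids `q_m` for all `m ≤ f n`, `m ≠ n`. -/
def Jcond (q : ℕ → ℚ) (f : ℕ → ℕ) (n k : ℕ) : Prop :=
  0 < k ∧ ∀ m ≤ f n, m ≠ n →
    ¬((q n : ℝ) - Real.sqrt 2 / (k : ℝ) < (q m : ℝ) ∧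
      (q m : ℝ) < (q n : ℝ) + Real.sqrt 2 / (k : ℝ))

/-- The clopen interval `Jₙ^f = (qₙ - √2/k, qₙ + √2/k) ∩ ℚ`, where `k` is least
such that `q_m ∉ Jₙ^f` whenever `m ≤ f n` and `m ≠ n`. -/
noncomputable def Jset (q : ℕ → ℚ) (f : ℕ → ℕ) (n : ℕ) : Set ℚ :=
  if h : ∃ k : ℕ, Jcond q f n k then
    {x : ℚ | (q n : ℝ) - Real.sqrt 2 / (Nat.find h : ℝ) < (x : ℝ) ∧
      (x : ℝ) < (q n : ℝ) + Real.sqrt 2 / (Nat.find h : ℝ)}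
  else ∅

/-- `X(f) = ℚ⁺ \ ⋃ {Jₙ^f : qₙ ∉ X}`. -/
noncomputable def XF (q : ℕ → ℚ) (f : ℕ → ℕ) (X : Set ℚ) : Set ℚ :=
  QposSet \ ⋃ n ∈ {n : ℕ | q n ∉ X}, Jset q f n

section helpers
variable {q : ℕ → ℚ}

lemma sqrt2_pos : (0:ℝ) < Real.sqrt 2 := Real.sqrt_pos.mpr (by norm_num)

lemma jexists (hinj : Function.Injective q) (f : ℕ → ℕ) (n : ℕ) :
    ∃ k : ℕ, Jcond q f n k := by
  set S := (Finset.range (f n + 1)).filter (fun m => m ≠ n) with hS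
  by_cases hne : S.Nonempty
  · set D : ℝ := S.inf' hne (fun m => |(q m : ℝ) - q n|) with hD
    have hDpos : 0 < D := by
      rw [hD, Finset.lt_inf'_iff]
      intro m hm
      have hmn : m ≠ n := (Finset.mem_filter.mp hm).2
      have : q m ≠ q n := fun h => hmn (hinj h)
      have : (q m : ℝ) ≠ q n := by exact_mod_cast this
      exact abs_pos.mpr (sub_ne_zero.mpr this)
    obtain ⟨k, hk⟩ := exists_nat_gt (Real.sqrt 2 / D)
    refine ⟨k + 1, Nat.succ_pos _, ?_⟩
    intro m hm hmn hmem
    have hmS : m ∈ S := Finset.mem_filter.mpr ⟨Finset.mem_range.mpr (Nat.lt_succ_of_le hm), hmn⟩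
    have hle : D ≤ |(q m : ℝ) - q n| := Finset.inf'_le _ hmS
    have hkpos : (0:ℝ) < (k + 1 : ℕ) := by positivity
    have hrlt : Real.sqrt 2 / ((k + 1 : ℕ) : ℝ) < D := by
      rw [div_lt_iff₀ hkpos]
      have : Real.sqrt 2 / D < (k + 1 : ℕ) := by
        push_cast; linarith
      calc Real.sqrt 2 = (Real.sqrt 2 / D) * D := by field_simp
        _ < ((k+1:ℕ):ℝ) * D := mul_lt_mul_of_pos_right this hDpos
        _ = D * ((k+1:ℕ):ℝ) := by ring
    have habs : |(q m : ℝ) - q n| < Real.sqrt 2 / ((k + 1 : ℕ) : ℝ) := by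
      rw [abs_sub_lt_iff]; constructor <;> linarith [hmem.1, hmem.2]
    linarith
  · refine ⟨1, one_pos, ?_⟩
    intro m hm hmn _
    exact hne ⟨m, Finset.mem_filter.mpr ⟨Finset.mem_range.mpr (Nat.lt_succ_of_le hm), hmn⟩⟩

lemma not_mem_Jset (f : ℕ → ℕ) {m n : ℕ} (hm : m ≤ f n) (hne : m ≠ n) :
    q m ∉ Jset q f n := by
  unfold Jset
  split_ifs with h
  · intro hx
    exact (Nat.find_spec h).2 m hm hne hx
  · exact Set.notMem_empty _

lemma center_mem_Jset (hinj : Function.Injective q) (f : ℕ → ℕ) (n : ℕ) :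
    q n ∈ Jset q f n := by
  have h := jexists hinj f n
  unfold Jset
  rw [dif_pos h]
  have hk : (0:ℝ) < (Nat.find h : ℝ) := by exact_mod_cast (Nat.find_spec h).1
  have : 0 < Real.sqrt 2 / (Nat.find h : ℝ) := div_pos sqrt2_pos hk
  exact ⟨by linarith, by linarith⟩

lemma Jset_anti (hinj : Function.Injective q) {f g : ℕ → ℕ} {n : ℕ} (hfg : f n ≤ g n) :
    Jset q g n ⊆ Jset q f n := by
  have hf := jexists hinj f n
  have hgE := jexists hinj g n
  unfold Jset
  rw [dif_pos hf, dif_pos hgE]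
  have hle : Nat.find hf ≤ Nat.find hgE := by
    apply Nat.find_min'
    obtain ⟨hpos, hP⟩ := Nat.find_spec hgE
    exact ⟨hpos, fun m hm hne => hP m (hm.trans hfg) hne⟩
  have hfpos : (0:ℝ) < (Nat.find hf : ℝ) := by exact_mod_cast (Nat.find_spec hf).1
  have hle' : (Nat.find hf : ℝ) ≤ (Nat.find hgE : ℝ) := by exact_mod_cast hle
  have hr : Real.sqrt 2 / (Nat.find hgE : ℝ) ≤ Real.sqrt 2 / (Nat.find hf : ℝ) := by
    gcongr
  intro x hx
  exact ⟨by linarith [hx.1], by linarith [hx.2]⟩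

lemma Jset_upper (hinj : Function.Injective q) (f : ℕ → ℕ) (n : ℕ) {x : ℚ}
    (hx : x ∈ Jset q f n) : (x:ℝ) < q n + Real.sqrt 2 := by
  unfold Jset at hx
  rw [dif_pos (jexists hinj f n)] at hx
  have hk : (1:ℝ) ≤ (Nat.find (jexists hinj f n) : ℝ) := by
    exact_mod_cast (Nat.find_spec (jexists hinj f n)).1
  have : Real.sqrt 2 / (Nat.find (jexists hinj f n) : ℝ) ≤ Real.sqrt 2 :=
    div_le_self (Real.sqrt_nonneg 2) hk
  linarith [hx.2]

lemma isOpen_Jset (f : ℕ → ℕ) (n : ℕ) : IsOpen (Jset q f n) := by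
  unfold Jset
  split_ifs with h
  · exact (isOpen_Ioo (a := (q n : ℝ) - Real.sqrt 2 / (Nat.find h : ℝ))
      (b := (q n : ℝ) + Real.sqrt 2 / (Nat.find h : ℝ))).preimage Rat.continuous_coe_real
  · exact isOpen_empty

lemma isOpen_compl_Jset (hinj : Function.Injective q) (f : ℕ → ℕ) (n : ℕ) :
    IsOpen {x : ℚ | x ∉ Jset q f n} := by
  have h := jexists hinj f n
  have hkpos : Nat.find h ≠ 0 := Nat.pos_iff_ne_zero.mp (Nat.find_spec h).1
  have hirr : Irrational (Real.sqrt 2 / (Nat.find h : ℝ)) :=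
    irrational_sqrt_two.div_natCast hkpos
  unfold Jset
  rw [dif_pos h]
  set a : ℝ := (q n : ℝ) - Real.sqrt 2 / (Nat.find h : ℝ) with ha
  set b : ℝ := (q n : ℝ) + Real.sqrt 2 / (Nat.find h : ℝ) with hb
  have hairr : Irrational a := by rw [ha]; exact hirr.ratCast_sub (q n)
  have hbirr : Irrational b := by rw [hb]; exact hirr.ratCast_add (q n)
  have heq : {x : ℚ | x ∉ {x : ℚ | a < (x:ℝ) ∧ (x:ℝ) < b}} =
      (fun x : ℚ => (x:ℝ)) ⁻¹' (Set.Iio a ∪ Set.Ioi b) := by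
    ext x
    simp only [Set.mem_setOf_eq, Set.mem_preimage, Set.mem_union, Set.mem_Iio, Set.mem_Ioi,
      not_and_or, not_lt]
    constructor
    · rintro (h1 | h1)
      · left; exact lt_of_le_of_ne h1 (fun he => hairr ⟨x, he⟩)
      · right; exact lt_of_le_of_ne h1 (fun he => hbirr ⟨x, he.symm⟩)
    · rintro (h1 | h1)
      · left; exact le_of_lt h1
      · right; exact le_of_lt h1
  rw [heq]
  exact (isOpen_Iio.union isOpen_Ioi).preimage Rat.continuous_coe_real

end helpers

/-- For every crowded unbounded `X ⊆ ℚ⁺` there is an `f_X : ω → ω` such that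
for every increasing `g` with `g ≰* f_X`, the set `X(g)` is crowded, unbounded
and closed in ℚ⁺ (hence perfect unbounded). -/


theorem stmt11 (q : ℕ → ℚ) (hinj : Function.Injective q) (hran : Set.range q = QposSet)
    (X : Set ℚ) (hX : X ⊆ QposSet) (hcr : CrowdedIn X) (hub : UnbAbove X) :
    ∃ fX : ℕ → ℕ, ∀ g : ℕ → ℕ, StrictMono g →
      (¬ ∀ᶠ n in Filter.atTop, g n ≤ fX n) →
      CrowdedIn (XF q g X) ∧ UnbAbove (XF q g X) ∧ ClosedInPos (XF q g X) := by
  classical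
  -- candidate points for crowdedness
  have hA : ∀ j s N : ℕ, ∃ i : ℕ, q j ∈ X →
      (q i ∈ X ∧ q i ≠ q j ∧ dist (q i) (q j) < 1/((s:ℝ)+1) ∧
        ∀ n, j < n → n < N → q i ∉ Jset q id n) := by
    intro j s N
    by_cases hj : q j ∈ X
    · set V : Set ℚ := {y : ℚ | ∀ n ∈ Finset.Ico (j+1) N, y ∉ Jset q id n} with hV
      have hVopen : IsOpen V := by
        have : V = ⋂ n ∈ Finset.Ico (j+1) N, {y : ℚ | y ∉ Jset q id n} := by
          ext y; simp [hV]
        rw [this]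
        exact isOpen_biInter_finset fun n _ => isOpen_compl_Jset hinj id n
      have hxV : q j ∈ V := by
        intro n hn
        have hjn : j < n := (Finset.mem_Ico.mp hn).1
        exact not_mem_Jset id (le_of_lt hjn) (ne_of_lt hjn)
      obtain ⟨ρ, hρpos, hball⟩ := Metric.isOpen_iff.mp hVopen _ hxV
      have hεpos : 0 < min ρ (1/((s:ℝ)+1)) := by positivity
      have hcl := hcr (q j) hj
      rw [Metric.mem_closure_iff] at hcl
      obtain ⟨y, hy, hdist⟩ := hcl _ hεpos
      have hyQ : y ∈ QposSet := hX hy.1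
      rw [← hran] at hyQ
      obtain ⟨i, hi⟩ := hyQ
      refine ⟨i, fun _ => ⟨hi ▸ hy.1, ?_, ?_, ?_⟩⟩
      · rw [hi]; exact fun he => hy.2 (by simp [he])
      · rw [hi, dist_comm]; exact hdist.trans_le (min_le_right _ _)
      · intro n hjn hnN
        have : q i ∈ Metric.ball (q j) ρ := by
          rw [Metric.mem_ball, hi, dist_comm]
          exact hdist.trans_le (min_le_left _ _)
        exact hball this n (Finset.mem_Ico.mpr ⟨hjn, hnN⟩)
    · exact ⟨0, fun h => absurd h hj⟩
  -- candidate points for unboundedness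
  have hB : ∀ N : ℕ, ∃ i : ℕ, q i ∈ X ∧ (N:ℚ) < q i ∧ ∀ n < N, q i ∉ Jset q id n := by
    intro N
    set B : ℕ := N + (Finset.range N).sup (fun n => ⌈q n⌉₊) + 2 with hB'
    obtain ⟨y, hyX, hyB⟩ := hub (B:ℚ)
    have hyQ : y ∈ QposSet := hX hyX
    rw [← hran] at hyQ
    obtain ⟨i, hi⟩ := hyQ
    refine ⟨i, hi ▸ hyX, ?_, ?_⟩
    · rw [hi]
      calc (N:ℚ) ≤ (B:ℚ) := by exact_mod_cast Nat.le_add_right N _ |>.trans (Nat.le_add_right _ 2)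
        _ < y := hyB
    · intro n hn hmem
      have h1 : (q i : ℝ) < q n + Real.sqrt 2 := Jset_upper hinj id n hmem
      have h2 : (q n : ℚ) ≤ (⌈q n⌉₊ : ℚ) := Nat.le_ceil _
      have h3 : ⌈q n⌉₊ ≤ (Finset.range N).sup (fun n => ⌈q n⌉₊) :=
        Finset.le_sup (f := fun n => ⌈q n⌉₊) (Finset.mem_range.mpr hn)
      have h4n : ⌈q n⌉₊ + 2 ≤ B := by
        rw [hB']; omega
      have h4 : (q n : ℚ) + 2 ≤ (B:ℚ) := by
        calc (q n : ℚ) + 2 ≤ (⌈q n⌉₊ : ℚ) + 2 := by linarith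
          _ ≤ (B:ℚ) := by exact_mod_cast h4n
      have h5 : (B:ℚ) < q i := hi ▸ hyB
      have hs2 : Real.sqrt 2 < 2 := by
        nlinarith [Real.sq_sqrt (by norm_num : (0:ℝ) ≤ 2), Real.sqrt_nonneg 2]
      have h4' : (q n : ℝ) + 2 ≤ (B:ℝ) := by exact_mod_cast h4
      have h5' : (B:ℝ) < (q i : ℝ) := by exact_mod_cast h5
      linarith
  choose yI hyI using hA
  choose wI hw1 hw2 hw3 using hB
  refine ⟨fun N => max (wI N)
    ((Finset.range (N+1)).sup fun j => (Finset.range (N+1)).sup fun s => yI j s N), ?_⟩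
  intro g hgmono hng
  set fX : ℕ → ℕ := fun N => max (wI N)
    ((Finset.range (N+1)).sup fun j => (Finset.range (N+1)).sup fun s => yI j s N) with hfX
  have hgn : ∀ n, n ≤ g n := fun n => hgmono.le_apply
  have hinfty : ∀ a : ℕ, ∃ N, a ≤ N ∧ fX N < g N := by
    intro a
    by_contra hcon
    push_neg at hcon
    apply hng
    rw [Filter.eventually_atTop]
    exact ⟨a, fun n hn => hcon n hn⟩
  have hXFsub : XF q g X ⊆ X := by
    intro x hx
    by_contra hxX
    obtain ⟨j, hj⟩ : ∃ j, q j = x := by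
      have := hx.1; rw [← hran] at this; exact this
    exact hx.2 (Set.mem_biUnion (show j ∈ {n : ℕ | q n ∉ X} from by
      simp only [Set.mem_setOf_eq, hj]; exact hxX) (hj ▸ center_mem_Jset hinj g j))
  refine ⟨?_, ?_, ?_⟩
  · -- Crowded
    intro x hxXF
    have hxX : x ∈ X := hXFsub hxXF
    obtain ⟨j, hj⟩ : ∃ j, q j = x := by
      have := hxXF.1; rw [← hran] at this; exact this
    rw [Metric.mem_closure_iff]
    intro ε hε
    set F0 : Finset ℕ := (Finset.range (j+1)).filter (fun n => q n ∉ X) with hF0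
    set V : Set ℚ := {y : ℚ | ∀ n ∈ F0, y ∉ Jset q g n} with hV
    have hVopen : IsOpen V := by
      have : V = ⋂ n ∈ F0, {y : ℚ | y ∉ Jset q g n} := by ext y; simp [hV]
      rw [this]
      exact isOpen_biInter_finset fun n _ => isOpen_compl_Jset hinj g n
    have hxV : x ∈ V := by
      intro n hn hmem
      exact hxXF.2 (Set.mem_biUnion (show n ∈ {m : ℕ | q m ∉ X} from
        (Finset.mem_filter.mp hn).2) hmem)
    obtain ⟨ρ, hρpos, hball⟩ := Metric.isOpen_iff.mp hVopen _ hxV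
    obtain ⟨s, hs⟩ : ∃ s : ℕ, 1/((s:ℝ)+1) < min ρ ε := by
      obtain ⟨s, hs⟩ := exists_nat_gt (1 / min ρ ε)
      refine ⟨s, ?_⟩
      have hmin : 0 < min ρ ε := lt_min hρpos hε
      rw [div_lt_iff₀ (by positivity)]
      rw [div_lt_iff₀ hmin] at hs
      nlinarith
    obtain ⟨N, hN, hfXN⟩ := hinfty (max j s)
    have hjX : q j ∈ X := hj ▸ hxX
    obtain ⟨hiX, hine, hidist, hiavoid⟩ := hyI j s N hjX
    set i := yI j s N with hidef
    have hifX : i ≤ fX N := by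
      refine le_trans ?_ (le_max_right _ _)
      refine le_trans ?_ (Finset.le_sup (f := fun j => (Finset.range (N+1)).sup fun s => yI j s N)
        (Finset.mem_range.mpr (Nat.lt_succ_of_le ((le_max_left j s).trans hN))))
      exact Finset.le_sup (f := fun s => yI j s N)
        (Finset.mem_range.mpr (Nat.lt_succ_of_le ((le_max_right j s).trans hN)))
    have hdρ : dist (q i) x < ρ := by
      rw [← hj]
      exact hidist.trans (hs.trans_le (min_le_left _ _))
    refine ⟨q i, ⟨⟨hX hiX, ?_⟩, by simp [hj ▸ hine]⟩, ?_⟩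
    · -- q i not in the union
      intro hmem
      rw [Set.mem_iUnion₂] at hmem
      obtain ⟨n, hnX, hn⟩ := hmem
      rcases lt_or_ge j n with hjn | hnj
      · rcases lt_or_ge n N with hnN | hNn
        · exact hiavoid n hjn hnN (Jset_anti hinj (hgn n) hn)
        · have hgN : i < g n := lt_of_le_of_lt hifX (hfXN.trans_le (hgmono.monotone hNn))
          have hine' : i ≠ n := fun he => hnX (he ▸ hiX)
          exact not_mem_Jset g (le_of_lt hgN) hine' hn
      · have hnF0 : n ∈ F0 := Finset.mem_filter.mpr
          ⟨Finset.mem_range.mpr (Nat.lt_succ_of_le hnj), hnX⟩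
        exact hball (Metric.mem_ball.mpr hdρ) n hnF0 hn
    · rw [dist_comm, ← hj]
      exact hidist.trans (hs.trans_le (min_le_right _ _))
  · -- Unbounded
    intro b
    obtain ⟨N, hN, hfXN⟩ := hinfty ⌈b⌉₊
    set i := wI N with hidef
    have hifX : i ≤ fX N := le_max_left _ _
    refine ⟨q i, ⟨hX (hw1 N), ?_⟩, ?_⟩
    · intro hmem
      rw [Set.mem_iUnion₂] at hmem
      obtain ⟨n, hnX, hn⟩ := hmem
      rcases lt_or_ge n N with hnN | hNn
      · exact hw3 N n hnN (Jset_anti hinj (hgn n) hn)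
      · have hgN : i < g n := lt_of_le_of_lt hifX (hfXN.trans_le (hgmono.monotone hNn))
        have hine' : i ≠ n := fun he => hnX (he ▸ hw1 N)
        exact not_mem_Jset g (le_of_lt hgN) hine' hn
    · calc b ≤ (⌈b⌉₊ : ℚ) := Nat.le_ceil b
        _ ≤ (N : ℚ) := by exact_mod_cast hN
        _ < q i := hw2 N
  · -- Closed
    refine ⟨(⋃ n ∈ {n : ℕ | q n ∉ X}, Jset q g n)ᶜ, ?_, ?_⟩
    · rw [isClosed_compl_iff]
      exact isOpen_biUnion fun n _ => isOpen_Jset g n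
    · rw [XF, Set.diff_eq_compl_inter]
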